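/- Let f : ℕ → ℂ be an arithmetic function and let α > 0 be such that the series ∑_{n=1}^∞ |f(n)|/n^{1−α} converges. Let a be a nonzero integer and let B ≥ 2/α be real. Then there is a constant C > 0 (depending only on f, a and B) such that for all real x ≥ 3, ∑_{(log x)^B < m ≤ x−a} |f(m)| · ( ∑_{q ≤ (x−a)/m} d(q) ) ≤ C · x / log x, where m and q run over positive integers. -/

import Mathlib

open Finset

/-- The number of positive divisors of `n`. -/
def numDiv (n : ℕ) : ℕ := n.divisors.card

lemma divSum_le (N : ℕ) :
    ∑ q ∈ Finset.Icc 1 N, (numDiv q : ℝ) ≤ N * (1 + Real.log N) := by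
  have key : ∑ q ∈ Finset.Icc 1 N, (numDiv q) = ∑ d ∈ Finset.Icc 1 N, N / d := by
    have h1 : ∀ q ∈ Finset.Icc 1 N, numDiv q = ((Finset.Icc 1 N).filter (· ∣ q)).card := by
      intro q hq
      simp only [Finset.mem_Icc] at hq
      unfold numDiv
      congr 1
      ext d
      simp only [Nat.mem_divisors, Finset.mem_filter, Finset.mem_Icc]
      constructor
      · rintro ⟨hd, hq0⟩
        exact ⟨⟨Nat.one_le_iff_ne_zero.mpr (fun h => by simp [h] at hd; omega),
          le_trans (Nat.le_of_dvd (by omega) hd) hq.2⟩, hd⟩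
      · rintro ⟨⟨h1, h2⟩, hd⟩
        exact ⟨hd, by omega⟩
    rw [Finset.sum_congr rfl h1]
    simp only [Finset.card_filter]
    rw [Finset.sum_comm]
    refine Finset.sum_congr rfl fun d hd => ?_
    rw [← Finset.card_filter]
    rw [show Finset.Icc 1 N = Finset.Ioc 0 N from (Finset.Icc_add_one_left_eq_Ioc 0 N)]
    exact Nat.Ioc_filter_dvd_card_eq_div N d
  calc ∑ q ∈ Finset.Icc 1 N, (numDiv q : ℝ) = ((∑ d ∈ Finset.Icc 1 N, N / d : ℕ) : ℝ) := by
        rw [← key]; push_cast; ring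
    _ ≤ ∑ d ∈ Finset.Icc 1 N, (N : ℝ) / d := by
        push_cast
        exact Finset.sum_le_sum fun d _ => Nat.cast_div_le
    _ = N * ∑ d ∈ Finset.Icc 1 N, (d : ℝ)⁻¹ := by
        rw [Finset.mul_sum]; simp [div_eq_mul_inv]
    _ = N * (harmonic N : ℝ) := by
        rw [harmonic_eq_sum_Icc]; push_cast; ring
    _ ≤ N * (1 + Real.log N) := by
        exact mul_le_mul_of_nonneg_left (harmonic_le_one_add_log N) (Nat.cast_nonneg N)

set_option maxHeartbeats 1000000 in
theorem tail_sum_estimate (f : ℕ → ℂ) (α : ℝ) (hα : 0 < α)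
    (hf : Summable fun n : ℕ => ‖f (n + 1)‖ / (n + 1 : ℝ) ^ (1 - α))
    (a : ℤ) (ha : a ≠ 0) (B : ℝ) (hB : 2 / α ≤ B) :
    ∃ C : ℝ, 0 < C ∧ ∀ x : ℝ, 3 ≤ x →
      ∑ m ∈ (Finset.Icc 1 ⌊x - (a : ℝ)⌋₊).filter
          (fun m : ℕ => Real.log x ^ B < (m : ℝ)),
        ‖f m‖ * ∑ q ∈ Finset.Icc 1 ⌊(x - (a : ℝ)) / (m : ℝ)⌋₊, (numDiv q : ℝ) ≤
      C * x / Real.log x := by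
  set g : ℕ → ℝ := fun n => ‖f (n + 1)‖ / (n + 1 : ℝ) ^ (1 - α) with hg
  set T : ℝ := ∑' n, g n with hT
  have hgnn : ∀ n, 0 ≤ g n := fun n => div_nonneg (norm_nonneg _) (Real.rpow_nonneg (by positivity) _)
  have hT0 : 0 ≤ T := tsum_nonneg hgnn
  set c : ℝ := 1 + |(a : ℝ)| with hc
  have hc2 : 2 ≤ c := by
    have : (1 : ℝ) ≤ |(a : ℝ)| := by
      rw [← Int.cast_abs]; exact_mod_cast Int.one_le_abs ha
    linarith
  set K : ℝ := 2 + Real.log c with hK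
  have hlogc : 0 ≤ Real.log c := Real.log_nonneg (by linarith)
  have hK2 : 2 ≤ K := by linarith
  refine ⟨c * K * (T + 1), by positivity, fun x hx => ?_⟩
  have hx0 : (0 : ℝ) < x := by linarith
  have hlog : 1 ≤ Real.log x := by
    rw [Real.le_log_iff_exp_le hx0]
    calc Real.exp 1 ≤ 2.7182818286 := Real.exp_one_lt_d9.le
      _ ≤ x := by linarith
  have hlog0 : 0 < Real.log x := by linarith
  set y : ℝ := x - (a : ℝ) with hy
  set S := (Finset.Icc 1 ⌊y⌋₊).filter (fun m : ℕ => Real.log x ^ B < (m : ℝ)) with hS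
  set D : ℝ := Real.log x ^ (-2 : ℝ) * (c * K * x * Real.log x) with hD
  have hyc : y ≤ c * x := by
    have h1 : -(|(a:ℝ)|) ≤ (a:ℝ) := neg_abs_le _
    have h2 : 0 ≤ |(a:ℝ)| := abs_nonneg _
    nlinarith
  -- per-term bound
  have key : ∀ m ∈ S, ‖f m‖ * ∑ q ∈ Finset.Icc 1 ⌊y / (m : ℝ)⌋₊, (numDiv q : ℝ)
      ≤ g (m - 1) * D := by
    intro m hm
    simp only [hS, Finset.mem_filter, Finset.mem_Icc] at hm
    obtain ⟨⟨hm1, hm2⟩, hmB⟩ := hm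
    have hm0 : (0 : ℝ) < m := by exact_mod_cast hm1
    have hy0 : 0 ≤ y := by
      by_contra h
      push_neg at h
      rw [Nat.floor_of_nonpos h.le] at hm2
      omega
    set N : ℕ := ⌊y / (m : ℝ)⌋₊ with hN
    have hN1 : (N : ℝ) ≤ y / m := Nat.floor_le (by positivity)
    have hN2 : (N : ℝ) ≤ c * x / m := hN1.trans (by gcongr)
    have hNy : (N : ℝ) ≤ c * x := by
      calc (N:ℝ) ≤ y / m := hN1
        _ ≤ y / 1 := by gcongr; exact_mod_cast hm1
        _ = y := div_one y
        _ ≤ c * x := hyc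
    have hcx1 : 1 ≤ c * x := by nlinarith
    have hlogN : Real.log N ≤ Real.log (c * x) := by
      rcases Nat.eq_zero_or_pos N with h | h
      · simp [h]; exact Real.log_nonneg hcx1
      · exact Real.log_le_log (by exact_mod_cast h) hNy
    have hlogN0 : 0 ≤ Real.log N := by
      rcases Nat.eq_zero_or_pos N with h | h
      · simp [h]
      · exact Real.log_natCast_nonneg N
    have hlogcx : Real.log (c * x) = Real.log c + Real.log x :=
      Real.log_mul (by linarith) (by linarith)
    have hinner : ∑ q ∈ Finset.Icc 1 N, (numDiv q : ℝ) ≤ (c * x / m) * (K * Real.log x) := by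
      calc ∑ q ∈ Finset.Icc 1 N, (numDiv q : ℝ) ≤ N * (1 + Real.log N) := divSum_le N
        _ ≤ (c * x / m) * (K * Real.log x) := by
          have h1 : 1 + Real.log N ≤ K * Real.log x := by
            rw [hK]
            have := hlogN.trans_eq hlogcx
            nlinarith
          have h2 : (0:ℝ) ≤ 1 + Real.log N := by linarith
          exact mul_le_mul hN2 h1 h2 (by positivity)
    -- relate g (m-1) to ‖f m‖ / m
    have hgm : g (m - 1) = ‖f m‖ / (m : ℝ) ^ ((1 : ℝ) - α) := by
      have h1 : m - 1 + 1 = m := Nat.sub_add_cancel hm1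
      have h2 : ((m - 1 : ℕ) : ℝ) + 1 = (m : ℝ) := by
        rw [Nat.cast_sub hm1]; push_cast; ring
      simp only [hg, h1, h2]
    have hfm : ‖f m‖ / m = g (m - 1) * (m : ℝ) ^ (-α) := by
      rw [hgm, div_eq_mul_inv, div_eq_mul_inv, ← Real.rpow_neg hm0.le, mul_assoc,
        ← Real.rpow_add hm0, show -(1 - α) + -α = (-1 : ℝ) by ring, Real.rpow_neg_one]
    have hpow : (m : ℝ) ^ (-α) ≤ Real.log x ^ (-2 : ℝ) := by
      have hb0 : 0 < Real.log x ^ B := Real.rpow_pos_of_pos hlog0 B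
      calc (m : ℝ) ^ (-α) ≤ (Real.log x ^ B) ^ (-α) :=
            Real.rpow_le_rpow_of_nonpos hb0 hmB.le (neg_nonpos.mpr hα.le)
        _ = Real.log x ^ (B * (-α)) := (Real.rpow_mul hlog0.le _ _).symm
        _ ≤ Real.log x ^ (-2 : ℝ) := by
            apply Real.rpow_le_rpow_of_exponent_le hlog
            have h2Bα : 2 ≤ B * α := by
              rw [div_le_iff₀ hα] at hB; linarith
            nlinarith
    calc ‖f m‖ * ∑ q ∈ Finset.Icc 1 N, (numDiv q : ℝ)
        ≤ ‖f m‖ * ((c * x / m) * (K * Real.log x)) :=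
          mul_le_mul_of_nonneg_left hinner (norm_nonneg _)
      _ = (‖f m‖ / m) * (c * K * x * Real.log x) := by
          have hm' : (m:ℝ) ≠ 0 := ne_of_gt hm0
          field_simp
      _ ≤ (g (m - 1) * Real.log x ^ (-2 : ℝ)) * (c * K * x * Real.log x) := by
          rw [hfm]
          apply mul_le_mul_of_nonneg_right _ (by positivity)
          exact mul_le_mul_of_nonneg_left hpow (hgnn _)
      _ = g (m - 1) * D := by rw [hD]; ring
  have hsum : ∑ m ∈ S, ‖f m‖ * ∑ q ∈ Finset.Icc 1 ⌊y / (m : ℝ)⌋₊, (numDiv q : ℝ)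
      ≤ ∑ m ∈ S, g (m - 1) * D := Finset.sum_le_sum key
  have htail : ∑ m ∈ S, g (m - 1) ≤ T := by
    have hinj : ∀ m ∈ S, ∀ m' ∈ S, m - 1 = m' - 1 → m = m' := by
      intro m hm m' hm' h
      simp only [hS, Finset.mem_filter, Finset.mem_Icc] at hm hm'
      omega
    rw [← Finset.sum_image hinj]
    exact Summable.sum_le_tsum _ (fun i _ => hgnn i) hf
  have hD0 : 0 ≤ D := by
    rw [hD]; positivity
  have hDval : D = c * K * x / Real.log x := by
    rw [hD]
    rw [show (-2 : ℝ) = -(2:ℕ) by norm_num, Real.rpow_neg hlog0.le, Real.rpow_natCast]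
    field_simp
  calc ∑ m ∈ S, ‖f m‖ * ∑ q ∈ Finset.Icc 1 ⌊y / (m : ℝ)⌋₊, (numDiv q : ℝ)
      ≤ ∑ m ∈ S, g (m - 1) * D := hsum
    _ = (∑ m ∈ S, g (m - 1)) * D := (Finset.sum_mul _ _ _).symm
    _ ≤ T * D := mul_le_mul_of_nonneg_right htail hD0
    _ = T * (c * K * x) / Real.log x := by rw [hDval]; ring
    _ ≤ c * K * (T + 1) * x / Real.log x := by
        have h : T * (c * K * x) ≤ c * K * (T + 1) * x := by
          nlinarith [mul_pos (mul_pos (show (0:ℝ) < c by linarith) (show (0:ℝ) < K by linarith)) hx0]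
        exact div_le_div_of_nonneg_right h hlog0.le
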